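/- Let α ∈ (0,1), C_K ≥ 0, C₀ > 0, and ε > 0, and assume ε^α·( (1−α)/(2α²) + C_K/α ) < C₀. Let P, V : [1,+∞) → ℝ be continuously differentiable with P(t) > 0, P′(t) = V(t), and V′(t) + C_K·V(t) ≥ C₀·P(t)^{1−α} for all t ≥ 1, and assume ε·2^{1/α} < P(1) and (ε/α)·2^{1/α − 1} < V(1). Then P(t) ≥ ε·(1+t)^{1/α} for all t ≥ 1. -/

import Mathlib

open MeasureTheory Filter Set Real Topology

noncomputable section

private lemma hasDerivAt_onePlus_rpow (p t : ℝ) (ht : 0 < 1 + t) :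
    HasDerivAt (fun s : ℝ => (1 + s) ^ p) (p * (1 + t) ^ (p - 1)) t := by
  have h1 : HasDerivAt (fun s : ℝ => 1 + s) 1 t := (hasDerivAt_id t).const_add 1
  have h2 := (Real.hasDerivAt_rpow_const (x := 1 + t) (p := p) (Or.inl (ne_of_gt ht))).comp t h1
  exact h2.congr_deriv (by ring)

private lemma key_ineq (α CK C₀ ε : ℝ) (hα : α ∈ Ioo (0:ℝ) 1) (hCK : 0 ≤ CK)
    (hC₀ : 0 < C₀) (hε : 0 < ε)
    (hsmall : ε ^ α * ((1 - α) / (2 * α ^ 2) + CK / α) < C₀)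
    (t : ℝ) (ht : 1 ≤ t) :
    ε / α * (1/α - 1) * (1 + t) ^ (1/α - 2) + CK * (ε / α * (1 + t) ^ (1/α - 1))
      < C₀ * (ε * (1 + t) ^ (1/α)) ^ (1 - α) := by
  obtain ⟨hα0, hα1⟩ := hα
  have h1t : (0:ℝ) < 1 + t := by linarith
  have h2t : (2:ℝ) ≤ 1 + t := by linarith
  set u : ℝ := (1 + t) ^ (1/α - 1) with hu_def
  have hu : 0 < u := Real.rpow_pos_of_pos h1t _
  -- rewrite RHS
  have hRHS : (ε * (1 + t) ^ (1/α)) ^ (1 - α) = ε ^ (1 - α) * u := by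
    rw [Real.mul_rpow hε.le (Real.rpow_pos_of_pos h1t _).le, ← Real.rpow_mul h1t.le]
    congr 1
    rw [hu_def]
    congr 1
    field_simp
  -- rewrite the second-derivative term
  have hsplit : (1 + t) ^ (1/α - 2) = u * (1 + t)⁻¹ := by
    rw [hu_def, ← Real.rpow_neg_one (1 + t), ← Real.rpow_add h1t]
    congr 1; ring
  have hQ2le : ε / α * (1/α - 1) * (1 + t) ^ (1/α - 2)
      ≤ ε * ((1 - α) / (2 * α ^ 2)) * u := by
    rw [hsplit]
    have hc : 0 ≤ ε / α * (1/α - 1) := by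
      have : (0:ℝ) ≤ 1/α - 1 := by
        rw [sub_nonneg, le_div_iff₀ hα0]; linarith
      positivity
    have hinv : (1 + t)⁻¹ ≤ 1/2 := by
      rw [inv_le_comm₀ (by linarith) (by norm_num)]; linarith
    have h1 : ε / α * (1/α - 1) * (u * (1 + t)⁻¹) ≤ ε / α * (1/α - 1) * (u * (1/2)) := by
      apply mul_le_mul_of_nonneg_left _ hc
      exact mul_le_mul_of_nonneg_left hinv hu.le
    apply h1.trans_eq
    have hαne : α ≠ 0 := ne_of_gt hα0
    field_simp
  have hεα : ε ^ α * ε ^ (1 - α) = ε := by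
    rw [← Real.rpow_add hε, add_sub_cancel, Real.rpow_one]
  have hE : 0 < ε ^ (1 - α) := Real.rpow_pos_of_pos hε _
  have hmain : ε * ((1 - α) / (2 * α ^ 2) + CK / α) * u < C₀ * (ε ^ (1 - α) * u) := by
    have h1 : ε ^ α * ((1 - α) / (2 * α ^ 2) + CK / α) * (ε ^ (1 - α) * u)
        < C₀ * (ε ^ (1 - α) * u) :=
      mul_lt_mul_of_pos_right hsmall (by positivity)
    calc ε * ((1 - α) / (2 * α ^ 2) + CK / α) * u
        = ε ^ α * ((1 - α) / (2 * α ^ 2) + CK / α) * (ε ^ (1 - α) * u) := by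
          linear_combination (-(((1 - α) / (2 * α ^ 2) + CK / α) * u)) * hεα
      _ < C₀ * (ε ^ (1 - α) * u) := h1
  rw [hRHS]
  have hCKterm : CK * (ε / α * (1 + t) ^ (1/α - 1)) = ε * (CK / α) * u := by
    rw [hu_def]; ring
  rw [hCKterm]
  have hsum : ε * ((1 - α) / (2 * α ^ 2)) * u + ε * (CK / α) * u
      = ε * ((1 - α) / (2 * α ^ 2) + CK / α) * u := by ring
  linarith

/-- the ODE comparison argument in the proof of Theorem 1.7(iii):
if `P' = V`, `V' + C_K V ≥ C₀ P^{1-α}` on `[1,∞)`, with `P > 0`, and if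
`ε^α ((1-α)/(2α²) + C_K/α) < C₀`, `ε 2^{1/α} < P(1)`, `(ε/α) 2^{1/α-1} < V(1)`,
then `P(t) ≥ ε (1+t)^{1/α}` for all `t ≥ 1`.  Here `V'` is the derivative `V'`
of `V` within `[1,∞)`. -/
theorem ode_comparison_lower_bound
    (α CK C₀ ε : ℝ) (hα : α ∈ Ioo (0:ℝ) 1) (hCK : 0 ≤ CK) (hC₀ : 0 < C₀) (hε : 0 < ε)
    (hsmall : ε ^ α * ((1 - α) / (2 * α ^ 2) + CK / α) < C₀)
    (P V V' : ℝ → ℝ)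
    (hP_pos : ∀ t ≥ (1:ℝ), 0 < P t)
    (hP_deriv : ∀ t ≥ (1:ℝ), HasDerivWithinAt P (V t) (Ici 1) t)
    (hV_deriv : ∀ t ≥ (1:ℝ), HasDerivWithinAt V (V' t) (Ici 1) t)
    (hV'_cont : ContinuousOn V' (Ici 1))
    (hV_cont : ContinuousOn V (Ici 1))
    (hP_cont : ContinuousOn P (Ici 1))
    (hineq : ∀ t ≥ (1:ℝ), C₀ * P t ^ (1 - α) ≤ V' t + CK * V t)
    (hP1 : ε * 2 ^ (1/α) < P 1)
    (hV1 : ε / α * 2 ^ (1/α - 1) < V 1) :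
    ∀ t ≥ (1:ℝ), ε * (1 + t) ^ (1/α) ≤ P t := by
  obtain ⟨hα0, hα1⟩ := hα
  set Q : ℝ → ℝ := fun t => ε * (1 + t) ^ (1/α) with hQ_def
  set Q1 : ℝ → ℝ := fun t => ε / α * (1 + t) ^ (1/α - 1) with hQ1_def
  set Q2 : ℝ → ℝ := fun t => ε / α * (1/α - 1) * (1 + t) ^ (1/α - 2) with hQ2_def
  have h1t : ∀ t : ℝ, 1 ≤ t → (0:ℝ) < 1 + t := fun t ht => by linarith
  -- derivatives of Q and Q1
  have hQderiv : ∀ t : ℝ, 1 ≤ t → HasDerivAt Q (Q1 t) t := by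
    intro t ht
    have := (hasDerivAt_onePlus_rpow (1/α) t (h1t t ht)).const_mul ε
    refine this.congr_deriv ?_
    simp only [hQ1_def]
    ring
  have hQ1deriv : ∀ t : ℝ, 1 ≤ t → HasDerivAt Q1 (Q2 t) t := by
    intro t ht
    have := (hasDerivAt_onePlus_rpow (1/α - 1) t (h1t t ht)).const_mul (ε / α)
    refine this.congr_deriv ?_
    simp only [hQ2_def]
    have he : 1/α - 1 - 1 = 1/α - 2 := by ring
    rw [← he]
    ring
  have hQcont : ContinuousOn Q (Ici 1) := fun t ht =>
    (hQderiv t ht).continuousAt.continuousWithinAt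
  have hQ1cont : ContinuousOn Q1 (Ici 1) := fun t ht =>
    (hQ1deriv t ht).continuousAt.continuousWithinAt
  have hQ1val : Q 1 = ε * 2 ^ (1/α) := by
    simp only [hQ_def]; norm_num
  have hQ11val : Q1 1 = ε / α * 2 ^ (1/α - 1) := by
    simp only [hQ1_def]; norm_num
  -- the key ODE inequality for Q
  have hkey : ∀ t : ℝ, 1 ≤ t → Q2 t + CK * Q1 t < C₀ * Q t ^ (1 - α) := by
    intro t ht
    exact key_ineq α CK C₀ ε ⟨hα0, hα1⟩ hCK hC₀ hε hsmall t ht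
  -- set up the first-crossing argument
  by_contra hcon
  push_neg at hcon
  obtain ⟨t₁, ht₁1, ht₁⟩ := hcon
  set B : Set ℝ := Ici 1 ∩ (fun t => min (P t - Q t) (V t - Q1 t)) ⁻¹' (Iic 0) with hB_def
  have hmemB : ∀ t : ℝ, t ∈ B ↔ 1 ≤ t ∧ (P t ≤ Q t ∨ V t ≤ Q1 t) := by
    intro t
    simp only [hB_def, mem_inter_iff, mem_Ici, mem_preimage, mem_Iic, min_le_iff,
      sub_nonpos]
  have hBclosed : IsClosed B := by
    apply ContinuousOn.preimage_isClosed_of_isClosed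
      (((hP_cont.sub hQcont).inf (hV_cont.sub hQ1cont))) isClosed_Ici isClosed_Iic
  have hBne : B.Nonempty := ⟨t₁, (hmemB t₁).mpr ⟨ht₁1, Or.inl ht₁.le⟩⟩
  have hBbdd : BddBelow B := ⟨1, fun x hx => ((hmemB x).mp hx).1⟩
  set T : ℝ := sInf B with hT_def
  have hTmem : T ∈ B := hBclosed.csInf_mem hBne hBbdd
  have hT1 : 1 ≤ T := ((hmemB T).mp hTmem).1
  have hT1' : 1 < T := by
    rcases lt_or_eq_of_le hT1 with h | h
    · exact h
    · exfalso
      rcases ((hmemB T).mp hTmem).2 with h' | h'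
      · rw [← h] at h'; rw [hQ1val] at h'; linarith
      · rw [← h] at h'; rw [hQ11val] at h'; linarith
  -- strict inequalities before T
  have hbefore : ∀ s : ℝ, 1 ≤ s → s < T → Q s < P s ∧ Q1 s < V s := by
    intro s hs1 hsT
    have hsnot : s ∉ B := fun hs => absurd (csInf_le hBbdd hs) (not_le.mpr hsT)
    rw [hmemB] at hsnot
    push_neg at hsnot
    have := hsnot hs1
    exact ⟨this.1, this.2⟩
  -- P T ≥ Q T by continuity
  have hPTQ : Q T ≤ P T := by
    have hclos : T ∈ closure (Ico 1 T) := by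
      rw [closure_Ico (ne_of_lt hT1')]
      exact ⟨hT1, le_refl T⟩
    have hne : (𝓝[Ico 1 T] T).NeBot := mem_closure_iff_nhdsWithin_neBot.mp hclos
    have htend : Tendsto (fun s => P s - Q s) (𝓝[Ico 1 T] T) (𝓝 (P T - Q T)) :=
      ((hP_cont.sub hQcont) T hT1).mono Ico_subset_Ici_self
    have hev : ∀ᶠ s in 𝓝[Ico 1 T] T, (0:ℝ) ≤ P s - Q s := by
      filter_upwards [eventually_mem_nhdsWithin] with s hs
      have := (hbefore s hs.1 hs.2).1
      linarith
    have := ge_of_tendsto htend hev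
    linarith
  -- handle the two cases at T
  rcases ((hmemB T).mp hTmem).2 with hcase | hcase
  · -- case P T ≤ Q T : contradiction using monotonicity of P - Q
    set F : ℝ → ℝ := fun t => P t - Q t with hF_def
    have hFcont : ContinuousOn F (Icc 1 T) :=
      (hP_cont.sub hQcont).mono (Icc_subset_Ici_self)
    have hmono : StrictMonoOn F (Icc 1 T) := by
      apply strictMonoOn_of_deriv_pos (convex_Icc 1 T) hFcont
      intro x hx
      rw [interior_Icc] at hx
      have hx1 : 1 < x := hx.1
      have hPd : HasDerivAt P (V x) x :=
        (hP_deriv x hx1.le).hasDerivAt (Ici_mem_nhds hx1)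
      have hFd : HasDerivAt F (V x - Q1 x) x := hPd.sub (hQderiv x hx1.le)
      rw [hFd.deriv]
      have := (hbefore x hx1.le hx.2).2
      linarith
    have h01 : F 1 > 0 := by
      simp only [hF_def]; rw [hQ1val]; linarith
    have hend : F 1 < F T :=
      hmono ⟨le_refl 1, hT1⟩ ⟨hT1, le_refl T⟩ hT1'
    have : F T ≤ 0 := by simp only [hF_def]; linarith
    linarith
  · -- case V T ≤ Q1 T : contradiction using the integrating factor
    set g : ℝ → ℝ := fun t => Real.exp (CK * t) * (V t - Q1 t) with hg_def
    have hgderiv : ∀ x : ℝ, 1 ≤ x → HasDerivWithinAt g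
        (CK * Real.exp (CK * x) * (V x - Q1 x) + Real.exp (CK * x) * (V' x - Q2 x))
        (Ici 1) x := by
      intro x hx
      have hexp : HasDerivAt (fun t : ℝ => Real.exp (CK * t)) (Real.exp (CK * x) * CK) x := by
        simpa using ((hasDerivAt_id x).const_mul CK).exp
      have hVQ : HasDerivWithinAt (fun t => V t - Q1 t) (V' x - Q2 x) (Ici 1) x :=
        (hV_deriv x hx).sub (hQ1deriv x hx).hasDerivWithinAt
      have := hexp.hasDerivWithinAt.mul hVQ
      refine this.congr_deriv ?_
      ring
    have hgcont : ContinuousOn g (Icc 1 T) := fun x hx =>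
      ((hgderiv x hx.1).continuousWithinAt).mono Icc_subset_Ici_self
    have hmono : StrictMonoOn g (Icc 1 T) := by
      apply strictMonoOn_of_deriv_pos (convex_Icc 1 T) hgcont
      intro x hx
      rw [interior_Icc] at hx
      have hx1 : 1 < x := hx.1
      have hgd : HasDerivAt g
          (CK * Real.exp (CK * x) * (V x - Q1 x) + Real.exp (CK * x) * (V' x - Q2 x)) x :=
        (hgderiv x hx1.le).hasDerivAt (Ici_mem_nhds hx1)
      rw [hgd.deriv]
      obtain ⟨hPQx, hVQ1x⟩ := hbefore x hx1.le hx.2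
      have hQpos : 0 < Q x := by
        have := Real.rpow_pos_of_pos (h1t x hx1.le) (1/α)
        simp only [hQ_def]; positivity
      have h1 : C₀ * Q x ^ (1 - α) ≤ C₀ * P x ^ (1 - α) := by
        apply mul_le_mul_of_nonneg_left _ hC₀.le
        exact Real.rpow_le_rpow hQpos.le hPQx.le (by linarith)
      have h2 := hkey x hx1.le
      have h3 := hineq x hx1.le
      have hA : 0 < (V' x + CK * V x) - (Q2 x + CK * Q1 x) := by linarith
      nlinarith [mul_pos (Real.exp_pos (CK * x)) hA, Real.exp_pos (CK * x)]
    have h01 : g 1 > 0 := by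
      simp only [hg_def]
      rw [hQ11val]
      have := Real.exp_pos (CK * 1)
      nlinarith
    have hend : g 1 < g T :=
      hmono ⟨le_refl 1, hT1⟩ ⟨hT1, le_refl T⟩ hT1'
    have hgT : g T ≤ 0 := by
      simp only [hg_def]
      apply mul_nonpos_of_nonneg_of_nonpos (Real.exp_pos _).le
      linarith
    linarith
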